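/- Let μ be the uniform distribution on the unit circle S₁ ⊆ ℝ² and ν = (ν_{1/2} + ν_{3/2})/2 where ν_r is uniform on the circle of radius r. Then there is exactly one martingale coupling of (μ, ν), namely π(dx,dy) = π_x(dy) μ(dx) with π_x = (δ_{x/2} + δ_{3x/2})/2. -/

import Mathlib

open MeasureTheory Set
open scoped ENNReal RealInnerProductSpace

noncomputable section

/-- The uniform distribution on the circle of radius `r` in `ℝ²`. -/
def circleUniform (r : ℝ) : Measure (EuclideanSpace ℝ (Fin 2)) :=
  Measure.map (fun θ : ℝ => (WithLp.toLp 2 (r • ![Real.cos θ, Real.sin θ]) : EuclideanSpace ℝ (Fin 2)))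
    ((ENNReal.ofReal (2 * Real.pi))⁻¹ • volume.restrict (Set.Ico 0 (2 * Real.pi)))

/-- `κf` is the kernel of a martingale coupling from `p` to `q` on `ℝ²`. -/
def MTker2 (p q : Measure (EuclideanSpace ℝ (Fin 2)))
    (κf : EuclideanSpace ℝ (Fin 2) → Measure (EuclideanSpace ℝ (Fin 2))) : Prop :=
  (∀ x, IsProbabilityMeasure (κf x)) ∧ Measurable κf ∧ p.bind κf = q ∧
    ∀ᵐ x ∂p, Integrable (fun y => y) (κf x) ∧ (∫ y, y ∂(κf x)) = x

/-- The canonical kernel `x ↦ (δ_{x/2} + δ_{3x/2})/2`. -/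
def canonKer (x : EuclideanSpace ℝ (Fin 2)) : Measure (EuclideanSpace ℝ (Fin 2)) :=
  (2 : ℝ≥0∞)⁻¹ • (Measure.dirac ((2⁻¹ : ℝ) • x) + Measure.dirac (((3 : ℝ)/2) • x))

namespace UMT

abbrev E2 := EuclideanSpace ℝ (Fin 2)

/-- the base measure on `[0, 2π)` -/
def baseM : Measure ℝ :=
  (ENNReal.ofReal (2 * Real.pi))⁻¹ • volume.restrict (Set.Ico 0 (2 * Real.pi))

/-- the point at angle `θ` on the circle of radius `r` -/
def cpt (r θ : ℝ) : E2 := (WithLp.toLp 2 (r • ![Real.cos θ, Real.sin θ]) : E2)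

lemma circleUniform_eq (r : ℝ) : circleUniform r = baseM.map (cpt r) := rfl

instance baseM_prob : IsProbabilityMeasure baseM := by
  constructor
  rw [baseM, Measure.smul_apply, Measure.restrict_apply MeasurableSet.univ, Set.univ_inter,
    Real.volume_Ico, sub_zero, smul_eq_mul,
    ENNReal.inv_mul_cancel (by positivity) ENNReal.ofReal_ne_top]

lemma cpt_smul (r θ : ℝ) : cpt r θ = r • cpt 1 θ := by
  simp only [cpt, ← WithLp.toLp_smul, smul_smul, mul_one]

lemma cpt_measurable (r : ℝ) : Measurable (cpt r) := by
  have : Continuous (cpt r) := by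
    refine (PiLp.continuous_toLp 2 (fun _ : Fin 2 => ℝ)).comp (Continuous.const_smul ?_ r)
    rw [continuous_pi_iff]
    intro i
    fin_cases i <;> simp [Real.continuous_cos, Real.continuous_sin]
  exact this.measurable

lemma norm_cpt (r θ : ℝ) : ‖cpt r θ‖ = |r| := by
  have h : cpt 1 θ = (EuclideanSpace.equiv (Fin 2) ℝ).symm ![Real.cos θ, Real.sin θ] := by
    simp [cpt]
  have h2 : ‖cpt 1 θ‖ = 1 := by
    rw [h, EuclideanSpace.norm_eq, Fin.sum_univ_two]
    norm_num [Real.norm_eq_abs, sq_abs]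
  rw [cpt_smul, norm_smul, h2, Real.norm_eq_abs, mul_one]

instance circleUniform_prob (r : ℝ) : IsProbabilityMeasure (circleUniform r) := by
  rw [circleUniform_eq]
  exact Measure.isProbabilityMeasure_map (cpt_measurable r).aemeasurable

lemma map_smul_circle (c : ℝ) :
    Measure.map (fun x : E2 => c • x) (circleUniform 1) = circleUniform c := by
  rw [circleUniform_eq, circleUniform_eq,
    Measure.map_map (measurable_const_smul c) (cpt_measurable 1)]
  congr 1
  funext θ
  simp [Function.comp, ← cpt_smul]

lemma circle_sphere {r : ℝ} (hr : 0 ≤ r) {s : Set E2} (hs : MeasurableSet s)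
    (h : ∀ y ∈ s, ‖y‖ ≠ r) : circleUniform r s = 0 := by
  rw [circleUniform_eq, Measure.map_apply (cpt_measurable r) hs]
  convert measure_empty
  · ext θ
    simp only [Set.mem_preimage, Set.mem_empty_iff_false, iff_false]
    intro hmem
    exact h _ hmem (by rw [norm_cpt, abs_of_nonneg hr])
  · infer_instance

lemma lintegral_nnnorm_circle {r : ℝ} (hr : 0 ≤ r) :
    ∫⁻ y, (‖y‖₊ : ℝ≥0∞) ∂(circleUniform r) = ENNReal.ofReal r := by
  rw [circleUniform_eq, lintegral_map (by fun_prop) (cpt_measurable r)]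
  have : ∀ θ : ℝ, (‖cpt r θ‖₊ : ℝ≥0∞) = ENNReal.ofReal r := by
    intro θ
    change ‖cpt r θ‖ₑ = _
    rw [← ofReal_norm, norm_cpt, abs_of_nonneg hr]
  simp_rw [this]
  rw [lintegral_const, measure_univ, mul_one]

/-- decomposition of a probability measure concentrated on two points -/
lemma two_point_decomp {m : Measure E2} {a b : E2} (hab : a ≠ b)
    (h : m ({a, b} : Set E2)ᶜ = 0) :
    m = m {a} • Measure.dirac a + m {b} • Measure.dirac b := by
  ext s hs
  have hAB : MeasurableSet ({a, b} : Set E2) := ((Set.finite_singleton b).insert a).measurableSet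
  have hsplit : m s = m (s ∩ {a, b}) := by
    rw [← measure_inter_add_diff s hAB, measure_mono_null (Set.diff_subset_compl s _) h, add_zero]
  have hunion : s ∩ {a, b} = (s ∩ {a}) ∪ (s ∩ {b}) := by
    rw [← Set.inter_union_distrib_left]; rfl
  have hdisj : Disjoint (s ∩ {a}) (s ∩ {b}) := by
    apply Set.disjoint_left.mpr
    rintro y ⟨_, h1⟩ ⟨_, h2⟩
    exact hab ((Set.eq_of_mem_singleton h1).symm.trans (Set.eq_of_mem_singleton h2))
  have hmb : MeasurableSet (s ∩ {b}) := hs.inter (measurableSet_singleton b)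
  rw [hsplit, hunion, measure_union hdisj hmb]
  rw [Measure.add_apply, Measure.smul_apply, Measure.smul_apply,
    Measure.dirac_apply' _ hs, Measure.dirac_apply' _ hs]
  have ha : m (s ∩ {a}) = m {a} * s.indicator 1 a := by
    by_cases hmem : a ∈ s
    · rw [Set.inter_eq_self_of_subset_right (by simpa using hmem), Set.indicator_of_mem hmem,
        Pi.one_apply, mul_one]
    · rw [Set.indicator_of_notMem hmem, mul_zero,
        show s ∩ {a} = ∅ by ext y; simp; rintro _ rfl; exact absurd ‹_› hmem]
      exact measure_empty
  have hb : m (s ∩ {b}) = m {b} * s.indicator 1 b := by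
    by_cases hmem : b ∈ s
    · rw [Set.inter_eq_self_of_subset_right (by simpa using hmem), Set.indicator_of_mem hmem,
        Pi.one_apply, mul_one]
    · rw [Set.indicator_of_notMem hmem, mul_zero,
        show s ∩ {b} = ∅ by ext y; simp; rintro _ rfl; exact absurd ‹_› hmem]
      exact measure_empty
  rw [ha, hb]; rfl

instance canonKer_prob (x : E2) : IsProbabilityMeasure (canonKer x) := by
  constructor
  rw [canonKer, Measure.smul_apply, Measure.add_apply, measure_univ, measure_univ, smul_eq_mul,
    ← two_mul, ← mul_assoc, ENNReal.inv_mul_cancel (by norm_num) (by norm_num), one_mul]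

lemma canonKer_apply (x : E2) {s : Set E2} (hs : MeasurableSet s) :
    canonKer x s = 2⁻¹ * (((fun y : E2 => (2⁻¹:ℝ) • y) ⁻¹' s).indicator 1 x
      + ((fun y : E2 => ((3:ℝ)/2) • y) ⁻¹' s).indicator 1 x) := by
  rw [canonKer, Measure.smul_apply, Measure.add_apply, Measure.dirac_apply' _ hs,
    Measure.dirac_apply' _ hs, smul_eq_mul]
  rfl

lemma canonKer_measurable : Measurable canonKer := by
  refine Measure.measurable_of_measurable_coe _ fun s hs => ?_
  simp_rw [fun x => canonKer_apply x hs]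
  exact ((measurable_one.indicator ((measurable_const_smul (2⁻¹:ℝ)) hs)).add
    (measurable_one.indicator ((measurable_const_smul ((3:ℝ)/2)) hs))).const_mul _

lemma integrable_dirac' {f : E2 → E2} (hf : Measurable f) (a : E2) :
    Integrable f (Measure.dirac a) := by
  constructor
  · exact hf.aestronglyMeasurable
  · rw [HasFiniteIntegral, lintegral_dirac]
    exact ENNReal.coe_lt_top

lemma integrable_id_canonKer (x : E2) : Integrable (fun y : E2 => y) (canonKer x) := by
  rw [canonKer]
  refine Integrable.smul_measure ?_ (by norm_num)
  rw [integrable_add_measure]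
  exact ⟨integrable_dirac' measurable_id _, integrable_dirac' measurable_id _⟩

lemma integral_id_canonKer (x : E2) : ∫ y, y ∂(canonKer x) = x := by
  rw [canonKer, integral_smul_measure,
    integral_add_measure (integrable_dirac' (f := fun y => y) measurable_id _)
      (integrable_dirac' (f := fun y => y) measurable_id _),
    integral_dirac, integral_dirac]
  rw [← add_smul]
  norm_num
  module

lemma bind_canonKer :
    (circleUniform 1).bind canonKer
      = (2 : ℝ≥0∞)⁻¹ • (circleUniform (1/2) + circleUniform (3/2)) := by
  ext s hs
  rw [Measure.bind_apply hs canonKer_measurable.aemeasurable]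
  simp_rw [fun x => canonKer_apply x hs]
  rw [lintegral_const_mul _ (f := fun a => ((fun y : E2 => (2⁻¹:ℝ) • y) ⁻¹' s).indicator 1 a
      + ((fun y : E2 => ((3:ℝ)/2) • y) ⁻¹' s).indicator 1 a) ((measurable_one.indicator ((measurable_const_smul (2⁻¹:ℝ)) hs)).add
    (measurable_one.indicator ((measurable_const_smul ((3:ℝ)/2)) hs))),
    lintegral_add_left (measurable_one.indicator ((measurable_const_smul (2⁻¹:ℝ)) hs)),
    lintegral_indicator_one ((measurable_const_smul (2⁻¹:ℝ)) hs),
    lintegral_indicator_one ((measurable_const_smul ((3:ℝ)/2)) hs),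
    ← Measure.map_apply (measurable_const_smul (2⁻¹:ℝ)) hs,
    ← Measure.map_apply (measurable_const_smul ((3:ℝ)/2)) hs,
    map_smul_circle, map_smul_circle]
  rw [Measure.smul_apply, Measure.add_apply, smul_eq_mul]
  norm_num

lemma uniqueness {κf : E2 → Measure E2}
    (hκ : MTker2 (circleUniform 1)
      ((2 : ℝ≥0∞)⁻¹ • (circleUniform (1/2) + circleUniform (3/2))) κf) :
    ∀ᵐ x ∂(circleUniform 1), κf x = canonKer x := by
  obtain ⟨h1, h2, h3, h4⟩ := hκ
  set μ := circleUniform 1 with hμdef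
  -- the bad set off the two circles
  set A : Set E2 := ((fun y : E2 => ‖y‖) ⁻¹' {1/2, 3/2})ᶜ with hAdef
  have hA : MeasurableSet A :=
    (measurable_norm ((measurableSet_singleton ((1:ℝ)/2)).union
      (measurableSet_singleton ((3:ℝ)/2)))).compl
  -- a.e. x is on the unit circle
  have hA1 : ∀ᵐ x ∂μ, ‖x‖ = 1 := by
    rw [MeasureTheory.ae_iff]
    exact circle_sphere zero_le_one
      ((measurable_norm (measurableSet_singleton (1:ℝ))).compl)
      (fun y hy => hy)
  -- a.e. x, κf x is concentrated on the two circles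
  have hC : ∀ᵐ x ∂μ, κf x A = 0 := by
    have hν : ((2 : ℝ≥0∞)⁻¹ • (circleUniform (1/2) + circleUniform (3/2))) A = 0 := by
      rw [Measure.smul_apply, Measure.add_apply,
        circle_sphere (by norm_num) hA (fun y hy h => hy (Or.inl h)),
        circle_sphere (by norm_num) hA (fun y hy h => hy (Or.inr h))]
      simp
    have hbind : ∫⁻ x, κf x A ∂μ = 0 := by
      rw [← Measure.bind_apply hA h2.aemeasurable, h3, hν]
    exact (lintegral_eq_zero_iff ((Measure.measurable_coe hA).comp h2)).mp hbind
  -- the expected radius function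
  have hnn : Measurable (fun y : E2 => (‖y‖₊ : ℝ≥0∞)) := by fun_prop
  set g : E2 → ℝ≥0∞ := fun x => ∫⁻ y, (‖y‖₊ : ℝ≥0∞) ∂(κf x) with hgdef
  have hg : Measurable g := (Measure.measurable_lintegral hnn).comp h2
  have hint : ∫⁻ x, g x ∂μ = 1 := by
    rw [hgdef, ← Measure.lintegral_bind h2.aemeasurable hnn.aemeasurable, h3, lintegral_smul_measure, lintegral_add_measure,
      lintegral_nnnorm_circle (by norm_num), lintegral_nnnorm_circle (by norm_num),
      ← ENNReal.ofReal_add (by norm_num) (by norm_num)]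
    norm_num
    exact ENNReal.inv_mul_cancel (by norm_num) (by norm_num)
  have hge : ∀ᵐ x ∂μ, 1 ≤ g x := by
    filter_upwards [hA1, h4] with x hx1 hx4
    obtain ⟨hIx, hbar⟩ := hx4
    calc (1 : ℝ≥0∞) = ENNReal.ofReal ‖x‖ := by rw [hx1]; simp
    _ ≤ ENNReal.ofReal (∫ y, ‖y‖ ∂(κf x)) := by
        apply ENNReal.ofReal_le_ofReal
        nth_rewrite 1 [← hbar]
        exact norm_integral_le_integral_norm _
    _ = g x := ofReal_integral_norm_eq_lintegral_enorm hIx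
  have hle : ∀ᵐ x ∂μ, g x ≤ 1 := by
    have hsub : ∫⁻ x, (g x - 1) ∂μ = 0 := by
      rw [lintegral_sub measurable_const (by simp) hge, hint, lintegral_one, measure_univ,
        tsub_self]
    filter_upwards [(lintegral_eq_zero_iff (hg.sub measurable_const)).mp hsub] with x hx
    exact tsub_eq_zero_iff_le.mp hx
  have hD : ∀ᵐ x ∂μ, g x = 1 := by
    filter_upwards [hge, hle] with x h h'
    exact le_antisymm h' h
  -- main pointwise argument
  filter_upwards [h4, hA1, hC, hD] with x hx4 hx1 hxC hxD
  obtain ⟨hIx, hbar⟩ := hx4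
  haveI := h1 x
  set a : E2 := (2⁻¹ : ℝ) • x with hadef
  set b : E2 := ((3 : ℝ)/2) • x with hbdef
  have hx0 : x ≠ 0 := fun h => by rw [h, norm_zero] at hx1; norm_num at hx1
  have hab : a ≠ b := by
    intro h
    apply hx0
    have : ((2⁻¹ : ℝ) - 3/2) • x = 0 := by rw [sub_smul, ← hadef, ← hbdef, h, sub_self]
    rcases smul_eq_zero.mp this with h' | h'
    · norm_num at h'
    · exact h'
  have hnorm1 : ∫ y, ‖y‖ ∂(κf x) = 1 := by
    have h9 : ENNReal.ofReal (∫ y, ‖y‖ ∂(κf x)) = 1 :=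
      (ofReal_integral_norm_eq_lintegral_enorm hIx).trans hxD
    exact ENNReal.ofReal_eq_one.mp h9
  have hI0 : ∫ y, (‖y‖ - ⟪x, y⟫) ∂(κf x) = 0 := by
    rw [integral_sub hIx.norm (hIx.const_inner x), hnorm1, integral_inner hIx x, hbar,
      real_inner_self_eq_norm_mul_norm, hx1]
    norm_num
  have hae : ∀ᵐ y ∂(κf x), ‖y‖ - ⟪x, y⟫ = 0 := by
    have hpos : 0 ≤ᵐ[κf x] fun y => ‖y‖ - ⟪x, y⟫ := by
      refine Filter.Eventually.of_forall fun y => ?_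
      have := real_inner_le_norm x y
      rw [hx1, one_mul] at this
      simp only [Pi.zero_apply]
      linarith
    exact (integral_eq_zero_iff_of_nonneg_ae hpos (hIx.norm.sub (hIx.const_inner x))).mp hI0
  have hray : ∀ᵐ y ∂(κf x), y = ‖y‖ • x := by
    filter_upwards [hae] with y hy
    have h5 : ⟪x, y⟫ = ‖x‖ * ‖y‖ := by rw [hx1, one_mul]; linarith
    have h6 := inner_eq_norm_mul_iff_real.mp h5
    rw [hx1, one_smul] at h6
    exact h6.symm
  have hsupp : ∀ᵐ y ∂(κf x), ‖y‖ ∈ ({1/2, 3/2} : Set ℝ) := by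
    rw [MeasureTheory.ae_iff]
    exact hxC
  have htwo : κf x ({a, b} : Set E2)ᶜ = 0 := by
    have : ∀ᵐ y ∂(κf x), y ∈ ({a, b} : Set E2) := by
      filter_upwards [hray, hsupp] with y h5 h6
      simp only [Set.mem_insert_iff, Set.mem_singleton_iff] at h6 ⊢
      rcases h6 with h6 | h6
      · left; rw [h5, h6, hadef]; norm_num
      · right; rw [h5, h6, hbdef]
    exact MeasureTheory.ae_iff.mp this
  have hdecomp := two_point_decomp hab htwo
  -- masses
  have hfa : κf x {a} ≠ ⊤ := measure_ne_top _ _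
  have hfb : κf x {b} ≠ ⊤ := measure_ne_top _ _
  have hsum : κf x {a} + κf x {b} = 1 := by
    have huniv := congrArg (fun m : Measure E2 => m Set.univ) hdecomp
    simpa [measure_univ] using huniv.symm
  set α := (κf x {a}).toReal with hα
  set β := (κf x {b}).toReal with hβ
  have hsum' : α + β = 1 := by
    rw [hα, hβ, ← ENNReal.toReal_add hfa hfb, hsum, ENNReal.toReal_one]
  have hbar2 : α • a + β • b = x := by
    rw [hdecomp] at hbar
    rw [integral_add_measure
        ((integrable_dirac' (f := fun y => y) measurable_id a).smul_measure hfa)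
        ((integrable_dirac' (f := fun y => y) measurable_id b).smul_measure hfb),
      integral_smul_measure, integral_smul_measure, integral_dirac, integral_dirac] at hbar
    exact hbar
  have hcoef : α * 2⁻¹ + β * (3/2) = 1 := by
    have hco : α • a + β • b = (α * 2⁻¹ + β * (3/2)) • x := by
      rw [hadef, hbdef, smul_smul, smul_smul, add_smul]
    have h7 : ((α * 2⁻¹ + β * (3/2)) - 1) • x = 0 := by
      rw [sub_smul, ← hco, hbar2, one_smul, sub_self]
    rcases smul_eq_zero.mp h7 with h' | h'
    · linarith [h']
    · exact absurd h' hx0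
  have hαval : α = 1/2 := by linarith
  have hβval : β = 1/2 := by linarith
  have hma : κf x {a} = 2⁻¹ := by
    rw [← ENNReal.ofReal_toReal hfa, ← hα, hαval]
    rw [show (1/2 : ℝ) = 2⁻¹ by norm_num, ENNReal.ofReal_inv_of_pos (by norm_num)]
    norm_num
  have hmb : κf x {b} = 2⁻¹ := by
    rw [← ENNReal.ofReal_toReal hfb, ← hβ, hβval]
    rw [show (1/2 : ℝ) = 2⁻¹ by norm_num, ENNReal.ofReal_inv_of_pos (by norm_num)]
    norm_num
  rw [hdecomp, hma, hmb, canonKer, smul_add, hadef, hbdef]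

end UMT

open UMT

/-- For `μ` uniform on the unit circle and `ν = (ν_{1/2} + ν_{3/2})/2`, there is exactly
one martingale coupling of `(μ, ν)`, namely the one with conditional laws
`π_x = (δ_{x/2} + δ_{3x/2})/2`. -/
theorem unique_martingale_transport_circles :
    MTker2 (circleUniform 1)
      ((2 : ℝ≥0∞)⁻¹ • (circleUniform (1/2) + circleUniform (3/2))) canonKer ∧
    ∀ κf, MTker2 (circleUniform 1)
        ((2 : ℝ≥0∞)⁻¹ • (circleUniform (1/2) + circleUniform (3/2))) κf →
      ∀ᵐ x ∂(circleUniform 1), κf x = canonKer x := by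
  refine ⟨⟨fun x => canonKer_prob x, canonKer_measurable, bind_canonKer, ?_⟩,
    fun κf hκ => uniqueness hκ⟩
  exact Filter.Eventually.of_forall fun x => ⟨integrable_id_canonKer x, integral_id_canonKer x⟩
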